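/- Let L > 0 and let u : [0,L] → [0,π] be continuous. Then for all distinct s, t ∈ (0,L): (∫ₛᵗ cos u(τ) dτ)² + (∫ₛᵗ sin u(τ) dτ)² > 0. -/

import Mathlib

open Real Set intervalIntegral MeasureTheory

lemma aux_pos (L : ℝ) (u : ℝ → ℝ)
    (hu : ContinuousOn u (Set.Icc 0 L))
    (hrange : ∀ s ∈ Set.Icc 0 L, u s ∈ Set.Icc (0:ℝ) Real.pi)
    {s t : ℝ} (hs : s ∈ Set.Icc 0 L) (ht : t ∈ Set.Icc 0 L) (hst : s < t) :
    0 < (∫ τ in s..t, Real.cos (u τ)) ^ 2 + (∫ τ in s..t, Real.sin (u τ)) ^ 2 := by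
  by_contra h
  push_neg at h
  have hA2 : (∫ τ in s..t, Real.cos (u τ)) ^ 2 = 0 := by
    nlinarith [sq_nonneg (∫ τ in s..t, Real.cos (u τ)),
      sq_nonneg (∫ τ in s..t, Real.sin (u τ))]
  have hB2 : (∫ τ in s..t, Real.sin (u τ)) ^ 2 = 0 := by
    nlinarith [sq_nonneg (∫ τ in s..t, Real.cos (u τ)),
      sq_nonneg (∫ τ in s..t, Real.sin (u τ))]
  have hA : (∫ τ in s..t, Real.cos (u τ)) = 0 := by
    exact pow_eq_zero_iff (by norm_num) |>.mp hA2
  have hB : (∫ τ in s..t, Real.sin (u τ)) = 0 := by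
    exact pow_eq_zero_iff (by norm_num) |>.mp hB2
  have hsub : Set.Icc s t ⊆ Set.Icc 0 L := Set.Icc_subset_Icc hs.1 ht.2
  have hucont : ContinuousOn u (Set.Icc s t) := hu.mono hsub
  have hsin : ContinuousOn (fun τ => Real.sin (u τ)) (Set.Icc s t) :=
    Real.continuous_sin.comp_continuousOn hucont
  have hcos : ContinuousOn (fun τ => Real.cos (u τ)) (Set.Icc s t) :=
    Real.continuous_cos.comp_continuousOn hucont
  have hintsin : IntervalIntegrable (fun τ => Real.sin (u τ)) volume s t :=
    hsin.intervalIntegrable_of_Icc hst.le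
  -- sin (u τ) = 0 on Ioc s t
  rw [intervalIntegral.integral_of_le hst.le] at hB
  have hnonneg : 0 ≤ᵐ[volume.restrict (Set.Ioc s t)] fun τ => Real.sin (u τ) := by
    refine ae_restrict_of_forall_mem measurableSet_Ioc fun x hx => ?_
    have hxm : x ∈ Set.Icc 0 L := hsub ⟨hx.1.le, hx.2⟩
    exact Real.sin_nonneg_of_nonneg_of_le_pi (hrange x hxm).1 (hrange x hxm).2
  have hae : (fun τ => Real.sin (u τ)) =ᵐ[volume.restrict (Set.Ioc s t)] 0 :=
    (MeasureTheory.setIntegral_eq_zero_iff_of_nonneg_ae hnonneg hintsin.1).mp hB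
  have heq : Set.EqOn (fun τ => Real.sin (u τ)) 0 (Set.Ioc s t) :=
    volume.eqOn_Ioc_of_ae_eq hae (hsin.mono Set.Ioc_subset_Icc_self) continuousOn_const
  -- hence cos (u τ) = ±1 on Ioc s t
  have hpm : ∀ τ ∈ Set.Ioc s t, Real.cos (u τ) = 1 ∨ Real.cos (u τ) = -1 := by
    intro τ hτ
    have hτm : τ ∈ Set.Icc 0 L := hsub ⟨hτ.1.le, hτ.2⟩
    have hr := hrange τ hτm
    have hsin0 : Real.sin (u τ) = 0 := heq hτ
    rcases eq_or_lt_of_le hr.2 with hpi | hlt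
    · right; rw [hpi, Real.cos_pi]
    · left
      have hu0 : u τ = 0 :=
        (Real.sin_eq_zero_iff_of_lt_of_lt (by linarith [Real.pi_pos, hr.1]) hlt).mp hsin0
      rw [hu0, Real.cos_zero]
  have htmem : t ∈ Set.Ioc s t := ⟨hst, le_refl t⟩
  -- cos (u ·) is constant on Ioc s t
  have hconst : ∀ τ ∈ Set.Ioc s t, Real.cos (u τ) = Real.cos (u t) := by
    intro τ hτ
    by_contra hne
    have hsub2 : Set.uIcc τ t ⊆ Set.Ioc s t :=
      Set.ordConnected_Ioc.uIcc_subset hτ htmem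
    have hivt := intermediate_value_uIcc
      ((hcos.mono Set.Ioc_subset_Icc_self).mono hsub2)
    have h0 : (0:ℝ) ∈ Set.uIcc (Real.cos (u τ)) (Real.cos (u t)) := by
      rcases hpm τ hτ with h1 | h1 <;> rcases hpm t htmem with h2 | h2
      · exact absurd (h1.trans h2.symm) hne
      · rw [h1, h2, Set.mem_uIcc]; norm_num
      · rw [h1, h2, Set.mem_uIcc]; norm_num
      · exact absurd (h1.trans h2.symm) hne
    obtain ⟨x, hx, hx0⟩ := hivt h0
    have hx0' : Real.cos (u x) = 0 := hx0
    rcases hpm x (hsub2 hx) with h | h <;> rw [hx0'] at h <;> norm_num at h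
  -- but then the cos integral is nonzero
  rw [intervalIntegral.integral_of_le hst.le] at hA
  have : ∫ τ in Set.Ioc s t, Real.cos (u τ) = ∫ _ in Set.Ioc s t, Real.cos (u t) :=
    MeasureTheory.setIntegral_congr_fun measurableSet_Ioc hconst
  rw [this] at hA
  rw [MeasureTheory.setIntegral_const, Real.volume_real_Ioc_of_le hst.le,
    smul_eq_mul] at hA
  rcases hpm t htmem with h | h <;> rw [h] at hA <;> nlinarith

theorem stmt_1 (L : ℝ) (hL : 0 < L) (u : ℝ → ℝ)
    (hu : ContinuousOn u (Set.Icc 0 L))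
    (hrange : ∀ s ∈ Set.Icc 0 L, u s ∈ Set.Icc (0:ℝ) Real.pi) :
    ∀ s ∈ Set.Ioo (0:ℝ) L, ∀ t ∈ Set.Ioo (0:ℝ) L, s ≠ t →
      0 < (∫ τ in s..t, Real.cos (u τ)) ^ 2 + (∫ τ in s..t, Real.sin (u τ)) ^ 2 := by
  intro s hs t ht hne
  have hs' : s ∈ Set.Icc 0 L := ⟨hs.1.le, hs.2.le⟩
  have ht' : t ∈ Set.Icc 0 L := ⟨ht.1.le, ht.2.le⟩
  rcases hne.lt_or_gt with hlt | hlt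
  · exact aux_pos L u hu hrange hs' ht' hlt
  · rw [show (∫ τ in s..t, Real.cos (u τ)) = -(∫ τ in t..s, Real.cos (u τ)) from
      intervalIntegral.integral_symm t s,
      show (∫ τ in s..t, Real.sin (u τ)) = -(∫ τ in t..s, Real.sin (u τ)) from
      intervalIntegral.integral_symm t s, neg_pow, neg_pow]
    simpa using aux_pos L u hu hrange ht' hs' hlt
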